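/- Let G be a 3-connected planar cubic graph containing three quadrangular faces f1, f2, f3 pairwise adjacent around a common structure (f1 and f2 sharing edge v1v2, f3 adjacent to both along u3w3), with the fourth surrounding face of size at least 5. Let G2 be obtained by collapsing the union of f1, f2, f3 to a single vertex. Then every Hamiltonian cycle of G2 extends to a Hamiltonian cycle of G. -/

import Mathlib

open SimpleGraph

/-- A combinatorial plane graph: a graph together with a set of faces, each face
being a set of boundary edges, such that every edge lies on exactly two faces, and
Euler's formula holds (our combinatorial proxy for a planar embedding). -/
structure PlaneGraph (V : Type) [Fintype V] [DecidableEq V] where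
  G : SimpleGraph V
  F : Type
  [fintypeF : Fintype F]
  sides : F → Set (Sym2 V)
  sides_sub : ∀ f, sides f ⊆ G.edgeSet
  two_faces : ∀ e ∈ G.edgeSet, Set.ncard {f | e ∈ sides f} = 2
  euler : Fintype.card V + Fintype.card F = G.edgeSet.ncard + 2

namespace PlaneGraph

variable {V : Type} [Fintype V] [DecidableEq V]

/-- The size of a face: the number of edges on its boundary. -/
noncomputable def size (P : PlaneGraph V) (f : P.F) : ℕ := (P.sides f).ncard

/-- Two faces are adjacent if they are distinct and share an edge. -/
def FaceAdj (P : PlaneGraph V) (f g : P.F) : Prop :=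
  f ≠ g ∧ (P.sides f ∩ P.sides g).Nonempty

/-- The graph is cubic (3-regular). -/
def Cubic (P : PlaneGraph V) : Prop := ∀ v, (P.G.neighborSet v).ncard = 3

end PlaneGraph

/-- A graph is `k`-connected if it has more than `k` vertices and removing
fewer than `k` vertices always leaves a connected graph. -/
def SimpleGraph.KConnected {V : Type} (G : SimpleGraph V) [Fintype V] (k : ℕ) : Prop :=
  k < Fintype.card V ∧
    ∀ s : Set V, s.ncard < k → ((G.induce (sᶜ : Set V)).Connected)
set_option maxHeartbeats 1000000

section ListHelpers
variable {α : Type*} {R : α → α → Prop}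

private lemma chain_prefix : ∀ (l₁ : List α) {l₂ : List α} {a : α},
    List.Chain R a (l₁ ++ l₂) → List.Chain R a l₁
  | [], _, _, _ => List.Chain.nil
  | b :: l, l₂, a, h => by
    simp only [List.Chain, List.cons_append, List.chain_cons] at h
    exact List.Chain.cons h.1 (chain_prefix l h.2)

private lemma chain_concat_getLast : ∀ (l : List α) (a b : α),
    List.Chain R a (l ++ [b]) → R ((a :: l).getLast (List.cons_ne_nil a l)) b
  | [], a, b, h => by
    simp only [List.Chain, List.nil_append, List.chain_cons] at h
    simpa using h.1
  | c :: l, a, b, h => by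
    simp only [List.Chain, List.cons_append, List.chain_cons] at h
    have := chain_concat_getLast l c b h.2
    rwa [List.getLast_cons (List.cons_ne_nil c l)]

private lemma chain_append_of : ∀ (l₁ : List α) (a b : α) (l₂ : List α),
    List.Chain R a l₁ → R ((a :: l₁).getLast (List.cons_ne_nil a l₁)) b →
    List.Chain R b l₂ → List.Chain R a (l₁ ++ b :: l₂)
  | [], a, b, l₂, _, hR, h2 => by
    simp only [List.getLast_singleton] at hR
    exact List.Chain.cons hR h2
  | c :: l, a, b, l₂, h1, hR, h2 => by
    simp only [List.Chain, List.chain_cons] at h1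
    simp only [List.Chain, List.cons_append, List.chain_cons]
    refine ⟨h1.1, chain_append_of l c b l₂ h1.2 ?_ h2⟩
    rwa [List.getLast_cons (List.cons_ne_nil c l)] at hR

end ListHelpers

section WalkHelpers
variable {V : Type} {G : SimpleGraph V}

private lemma walk_of_chain : ∀ (l : List α) (a : α) (G : SimpleGraph α),
    List.Chain G.Adj a l → ∃ (b : α) (w : G.Walk a b), w.support = a :: l
  | [], a, G, _ => ⟨a, Walk.nil, rfl⟩
  | c :: l, a, G, h => by
    simp only [List.Chain, List.chain_cons] at h
    obtain ⟨b, w, hw⟩ := walk_of_chain l c G h.2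
    exact ⟨b, Walk.cons h.1 w, by rw [Walk.support_cons, hw]⟩

private lemma edge_head {x : V} :
    ∀ {u v : V} (p : G.Walk u v), p.support.Nodup → s(x, u) ∈ p.edges →
      p.support.tail.head? = some x
  | u, _, Walk.nil, _, he => by simp at he
  | u, v, @Walk.cons _ _ _ b _ h q, hnd, he => by
    rw [Walk.edges_cons, List.mem_cons] at he
    rw [Walk.support_cons] at hnd ⊢
    rcases he with he | he
    · rw [Sym2.eq_iff] at he
      rcases he with ⟨_, rfl⟩ | ⟨rfl, _⟩
      · exact absurd h (G.irrefl)
      · rw [List.tail_cons, q.support_eq_cons]; rfl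
    · exfalso
      have := q.snd_mem_support_of_mem_edges he
      exact (List.nodup_cons.mp hnd).1 this

private lemma hamiltonian_of_cycle_list [Fintype V] [DecidableEq V]
    (a : V) (l : List V) (hchain : List.Chain G.Adj a l)
    (hne : l ≠ [])
    (hlast : G.Adj (l.getLast hne) a)
    (hnd : (a :: l).Nodup) (hcov : ∀ v, v ∈ a :: l) (hlen : 2 ≤ l.length) :
    G.IsHamiltonian := by
  intro _
  obtain ⟨b, w, hw⟩ := walk_of_chain l a G hchain
  have hb : b = l.getLast hne := by
    have h1 : (a :: l).getLast? = some b := by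
      rw [← hw, List.getLast?_eq_getLast w.support_ne_nil]
      exact congrArg _ w.getLast_support
    rw [List.getLast?_eq_getLast (List.cons_ne_nil a l), Option.some_inj,
      List.getLast_cons hne] at h1
    exact h1.symm
  subst hb
  refine ⟨_, Walk.cons hlast w, ?_⟩
  rw [Walk.isHamiltonianCycle_iff_isCycle_and_support_count_tail_eq_one]
  have hwnd : w.support.Nodup := hw ▸ hnd
  constructor
  · rw [Walk.cons_isCycle_iff]
    refine ⟨(Walk.isPath_def w).mpr hwnd, fun he => ?_⟩
    have := edge_head w hwnd he
    rw [hw, List.tail_cons] at this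
    -- head of l is getLast l : contradiction with nodup and length ≥ 2
    obtain ⟨c, l', rfl⟩ := List.exists_cons_of_ne_nil hne
    rw [List.head?_cons, Option.some_inj] at this
    have hl' : l' ≠ [] := by
      intro h; rw [h] at hlen; simp at hlen
    rw [List.getLast_cons hl'] at this
    have : c ∈ l' := this ▸ List.getLast_mem hl'
    have := List.nodup_cons.mp (List.nodup_cons.mp hnd).2
    exact this.1 ‹c ∈ l'›
  · intro v
    rw [Walk.support_cons, List.tail_cons, hw]
    exact List.count_eq_one_of_mem hnd (hcov v)

end WalkHelpers

example {V : Type} (v1 v2 u3 u4 w3 w4 t : V)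
    (hnodup : List.Nodup [v1, v2, u3, u4, w3, w4, t]) : v1 ≠ v2 := by
  simp only [List.nodup_cons, List.mem_cons, List.not_mem_nil, or_false, not_or,
    List.mem_singleton, List.nodup_nil, and_true] at hnodup
  obtain ⟨⟨n12, n13, n14, n15, n16, n17⟩, ⟨n23, n24, n25, n26, n27⟩,
    ⟨n34, n35, n36, n37⟩, ⟨n45, n46, n47⟩, ⟨n56, n57⟩, n67⟩ := hnodup
  exact n12

private lemma nbrs_eq {V : Type} [Fintype V] {G : SimpleGraph V} {v n1 n2 n3 : V}
    (h3 : (G.neighborSet v).ncard = 3) (h1 : G.Adj v n1) (h2 : G.Adj v n2) (h3' : G.Adj v n3)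
    (d12 : n1 ≠ n2) (d13 : n1 ≠ n3) (d23 : n2 ≠ n3) :
    G.neighborSet v = {n1, n2, n3} := by
  refine (Set.eq_of_subset_of_ncard_le ?_ ?_ (Set.toFinite _)).symm
  · intro x hx
    rcases hx with rfl | rfl | rfl
    exacts [h1, h2, h3']
  · rw [h3]
    exact le_of_eq (Set.ncard_eq_three.mpr ⟨n1, n2, n3, d12, d13, d23, rfl⟩).symm

private lemma third_nbr {V : Type} [Fintype V] {G : SimpleGraph V} {v n1 n2 : V}
    (h3 : (G.neighborSet v).ncard = 3) (h1 : G.Adj v n1) (h2 : G.Adj v n2) (d12 : n1 ≠ n2) :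
    ∃ x, G.Adj v x ∧ G.neighborSet v = {n1, n2, x} := by
  have hns : ¬(G.neighborSet v ⊆ {n1, n2}) := by
    intro h
    have h1' := Set.ncard_le_ncard h (Set.toFinite _)
    have h2' : ({n1, n2} : Set V).ncard ≤ 2 := by
      refine le_trans (Set.ncard_insert_le _ _) ?_
      simp [Set.ncard_singleton]
    rw [h3] at h1'
    omega
  obtain ⟨x, hx, hxn⟩ := Set.not_subset.mp hns
  have dx1 : n1 ≠ x := by rintro rfl; exact hxn (by simp)
  have dx2 : n2 ≠ x := by rintro rfl; exact hxn (by simp)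
  exact ⟨x, hx, nbrs_eq h3 h1 h2 hx d12 dx1 dx2⟩

private lemma chain_lift {α β : Type*} {R : α → α → Prop} {S : β → β → Prop} {f : α → β}
    {P : α → Prop} (hf : ∀ x y, P x → P y → R x y → S (f x) (f y)) :
    ∀ (l : List α) (a : α), P a → (∀ x ∈ l, P x) → List.Chain R a l →
      List.Chain S (f a) (l.map f)
  | [], a, _, _, _ => List.Chain.nil
  | c :: l, a, hPa, hPl, h => by
    simp only [List.Chain, List.chain_cons] at h
    exact List.Chain.cons (hf a c hPa (hPl c (by simp)) h.1)
      (chain_lift hf l c (hPl c (by simp)) (fun x hx => hPl x (by simp [hx])) h.2)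

private lemma getLast_map_cons {α β : Type*} (f : α → β) :
    ∀ (l : List α) (a : α),
      (f a :: l.map f).getLast (List.cons_ne_nil _ _) =
        f ((a :: l).getLast (List.cons_ne_nil _ _))
  | [], a => rfl
  | c :: l, a => by
    rw [List.map_cons, List.getLast_cons (List.cons_ne_nil _ _),
      List.getLast_cons (List.cons_ne_nil c l)]
    exact getLast_map_cons f l c
/-- Let `G` be a 3-connected planar cubic graph containing three quadrangular
faces `f1 = v1v2u3u4`, `f2 = v1v2w3w4` (sharing the edge `v1v2`) and `f3 =
v2u3tw3` (adjacent to both), the fourth surrounding face `f4` having size at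
least 5. If `G2` is obtained by collapsing the union of `f1, f2, f3` to a
single vertex, then every Hamiltonian cycle of `G2` extends to a Hamiltonian
cycle of `G`. -/
theorem reduce_three_quadrangles
    {V W : Type} [Fintype V] [DecidableEq V] [Fintype W] [DecidableEq W]
    (P : PlaneGraph V) (h3 : P.G.KConnected 3) (hcubic : P.Cubic)
    (hfaces : ∀ f, P.size f ≤ 6)
    (v1 v2 u3 u4 w3 w4 t : V)
    (hnodup : List.Nodup [v1, v2, u3, u4, w3, w4, t])
    (f1 f2 f3 f4 : P.F)
    (hf1 : P.sides f1 = {s(v1, v2), s(v2, u3), s(u3, u4), s(u4, v1)})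
    (hf2 : P.sides f2 = {s(v1, v2), s(v2, w3), s(w3, w4), s(w4, v1)})
    (hf3 : P.sides f3 = {s(v2, u3), s(u3, t), s(t, w3), s(w3, v2)})
    (hf4 : (∃ e ∈ P.sides f4, u4 ∈ e) ∧ (∃ e ∈ P.sides f4, w4 ∈ e) ∧
      f4 ≠ f1 ∧ f4 ≠ f2 ∧ f4 ≠ f3)
    (hs4 : 5 ≤ P.size f4)
    (φ : V → W) (hφsurj : Function.Surjective φ)
    (hcollapse : ∀ a ∈ ({v1, v2, u3, u4, w3, w4, t} : Set V),
      ∀ b ∈ ({v1, v2, u3, u4, w3, w4, t} : Set V), φ a = φ b)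
    (hinj : ∀ a b, φ a = φ b → a = b ∨
      (a ∈ ({v1, v2, u3, u4, w3, w4, t} : Set V) ∧
        b ∈ ({v1, v2, u3, u4, w3, w4, t} : Set V)))
    (G2 : SimpleGraph W)
    (hG2 : ∀ x y, G2.Adj x y ↔ ∃ a b, φ a = x ∧ φ b = y ∧ P.G.Adj a b ∧
      ¬(a ∈ ({v1, v2, u3, u4, w3, w4, t} : Set V) ∧
        b ∈ ({v1, v2, u3, u4, w3, w4, t} : Set V))) :
    G2.IsHamiltonian → P.G.IsHamiltonian := by

  classical
  intro hham
  set S := ({v1, v2, u3, u4, w3, w4, t} : Set V) with hS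
  have hSmem : ∀ x, x ∈ S ↔ (x = v1 ∨ x = v2 ∨ x = u3 ∨ x = u4 ∨ x = w3 ∨ x = w4 ∨ x = t) := by
    intro x; rw [hS]; simp
  -- distinctness
  have hnodup' := hnodup
  simp only [List.nodup_cons, List.mem_cons, List.not_mem_nil, or_false, not_or,
    List.mem_singleton, List.nodup_nil, and_true] at hnodup'
  obtain ⟨⟨n12, n13, n14, n15, n16, n17⟩, ⟨n23, n24, n25, n26, n27⟩,
    ⟨n34, n35, n36, n37⟩, ⟨n45, n46, n47⟩, ⟨n56, n57⟩, ⟨n67, -⟩⟩ := hnodup'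
  -- adjacency facts from faces
  have esub1 := P.sides_sub f1; rw [hf1] at esub1
  have esub2 := P.sides_sub f2; rw [hf2] at esub2
  have esub3 := P.sides_sub f3; rw [hf3] at esub3
  have a12 : P.G.Adj v1 v2 := (P.G.mem_edgeSet).mp (esub1 (by simp))
  have a2u3 : P.G.Adj v2 u3 := (P.G.mem_edgeSet).mp (esub1 (by simp))
  have au34 : P.G.Adj u3 u4 := (P.G.mem_edgeSet).mp (esub1 (by simp))
  have au41 : P.G.Adj u4 v1 := (P.G.mem_edgeSet).mp (esub1 (by simp))
  have a2w3 : P.G.Adj v2 w3 := (P.G.mem_edgeSet).mp (esub2 (by simp))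
  have aw34 : P.G.Adj w3 w4 := (P.G.mem_edgeSet).mp (esub2 (by simp))
  have aw41 : P.G.Adj w4 v1 := (P.G.mem_edgeSet).mp (esub2 (by simp))
  have au3t : P.G.Adj u3 t := (P.G.mem_edgeSet).mp (esub3 (by simp))
  have atw3 : P.G.Adj t w3 := (P.G.mem_edgeSet).mp (esub3 (by simp))
  -- neighborhoods
  have N1 : P.G.neighborSet v1 = {v2, u4, w4} :=
    nbrs_eq (hcubic v1) a12 au41.symm aw41.symm n24 n26 n46
  have N2 : P.G.neighborSet v2 = {v1, u3, w3} :=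
    nbrs_eq (hcubic v2) a12.symm a2u3 a2w3 n13 n15 n35
  have N3 : P.G.neighborSet u3 = {v2, u4, t} :=
    nbrs_eq (hcubic u3) a2u3.symm au34 au3t n24 n27 n47
  have N5 : P.G.neighborSet w3 = {v2, w4, t} :=
    nbrs_eq (hcubic w3) a2w3.symm aw34 atw3.symm n26 n27 n67
  obtain ⟨x4, hax4, N4⟩ := third_nbr (hcubic u4) au34.symm au41 (Ne.symm n13)
  obtain ⟨y4, hay4, N6⟩ := third_nbr (hcubic w4) aw34.symm aw41 (Ne.symm n15)
  obtain ⟨t4, hat4, N7⟩ := third_nbr (hcubic t) au3t.symm atw3 n35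
  -- closed neighborhood implications
  have hv1n : ∀ b, P.G.Adj v1 b → b = v2 ∨ b = u4 ∨ b = w4 := by
    intro b h
    have : b ∈ P.G.neighborSet v1 := h
    rw [N1] at this; simpa using this
  have hv2n : ∀ b, P.G.Adj v2 b → b = v1 ∨ b = u3 ∨ b = w3 := by
    intro b h
    have : b ∈ P.G.neighborSet v2 := h
    rw [N2] at this; simpa using this
  have hu3n : ∀ b, P.G.Adj u3 b → b = v2 ∨ b = u4 ∨ b = t := by
    intro b h
    have : b ∈ P.G.neighborSet u3 := h
    rw [N3] at this; simpa using this
  have hw3n : ∀ b, P.G.Adj w3 b → b = v2 ∨ b = w4 ∨ b = t := by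
    intro b h
    have : b ∈ P.G.neighborSet w3 := h
    rw [N5] at this; simpa using this
  have hu4n : ∀ b, P.G.Adj u4 b → b = u3 ∨ b = v1 ∨ b = x4 := by
    intro b h
    have : b ∈ P.G.neighborSet u4 := h
    rw [N4] at this; simpa using this
  have hw4n : ∀ b, P.G.Adj w4 b → b = w3 ∨ b = v1 ∨ b = y4 := by
    intro b h
    have : b ∈ P.G.neighborSet w4 := h
    rw [N6] at this; simpa using this
  have htn : ∀ b, P.G.Adj t b → b = u3 ∨ b = w3 ∨ b = t4 := by
    intro b h
    have : b ∈ P.G.neighborSet t := h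
    rw [N7] at this; simpa using this
  have chainA : List.Chain P.G.Adj u4 [u3, t, w3, v2, v1, w4] :=
    List.Chain.cons au34.symm (List.Chain.cons au3t (List.Chain.cons atw3 (List.Chain.cons a2w3.symm (List.Chain.cons a12.symm (List.Chain.cons aw41.symm List.Chain.nil)))))
  have covA : ∀ v ∈ S, v ∈ u4 :: [u3, t, w3, v2, v1, w4] := by
    intro v hv
    rw [hSmem] at hv
    rcases hv with rfl | rfl | rfl | rfl | rfl | rfl | rfl <;> simp
  have subA : ∀ v ∈ (u4 :: [u3, t, w3, v2, v1, w4] : List V), v ∈ S := by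
    intro v hv
    rw [hSmem]
    simp only [List.mem_cons, List.not_mem_nil, or_false] at hv
    rcases hv with rfl | rfl | rfl | rfl | rfl | rfl | rfl <;> simp
  have ndA : (u4 :: [u3, t, w3, v2, v1, w4] : List V).Nodup := by
    simp only [List.nodup_cons, List.mem_cons, List.not_mem_nil, or_false, not_or,
      List.mem_singleton, List.nodup_nil, and_true]
    refine ⟨⟨?_, ?_, ?_, ?_, ?_, ?_⟩, ⟨?_, ?_, ?_, ?_, ?_⟩, ⟨?_, ?_, ?_, ?_⟩,
      ⟨?_, ?_, ?_⟩, ⟨?_, ?_⟩, ?_, ?_⟩ <;> intro h <;>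
      first
        | exact h.elim
        | exact n12 h | exact n13 h | exact n14 h | exact n15 h | exact n16 h | exact n17 h
        | exact n23 h | exact n24 h | exact n25 h | exact n26 h | exact n27 h
        | exact n34 h | exact n35 h | exact n36 h | exact n37 h
        | exact n45 h | exact n46 h | exact n47 h | exact n56 h | exact n57 h | exact n67 h
        | exact n12 h.symm | exact n13 h.symm | exact n14 h.symm | exact n15 h.symm
        | exact n16 h.symm | exact n17 h.symm | exact n23 h.symm | exact n24 h.symm
        | exact n25 h.symm | exact n26 h.symm | exact n27 h.symm | exact n34 h.symm
        | exact n35 h.symm | exact n36 h.symm | exact n37 h.symm | exact n45 h.symm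
        | exact n46 h.symm | exact n47 h.symm | exact n56 h.symm | exact n57 h.symm
        | exact n67 h.symm
  have chainB : List.Chain P.G.Adj u4 [v1, w4, w3, v2, u3, t] :=
    List.Chain.cons au41 (List.Chain.cons aw41.symm (List.Chain.cons aw34.symm (List.Chain.cons a2w3.symm (List.Chain.cons a2u3 (List.Chain.cons au3t List.Chain.nil)))))
  have covB : ∀ v ∈ S, v ∈ u4 :: [v1, w4, w3, v2, u3, t] := by
    intro v hv
    rw [hSmem] at hv
    rcases hv with rfl | rfl | rfl | rfl | rfl | rfl | rfl <;> simp
  have subB : ∀ v ∈ (u4 :: [v1, w4, w3, v2, u3, t] : List V), v ∈ S := by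
    intro v hv
    rw [hSmem]
    simp only [List.mem_cons, List.not_mem_nil, or_false] at hv
    rcases hv with rfl | rfl | rfl | rfl | rfl | rfl | rfl <;> simp
  have ndB : (u4 :: [v1, w4, w3, v2, u3, t] : List V).Nodup := by
    simp only [List.nodup_cons, List.mem_cons, List.not_mem_nil, or_false, not_or,
      List.mem_singleton, List.nodup_nil, and_true]
    refine ⟨⟨?_, ?_, ?_, ?_, ?_, ?_⟩, ⟨?_, ?_, ?_, ?_, ?_⟩, ⟨?_, ?_, ?_, ?_⟩,
      ⟨?_, ?_, ?_⟩, ⟨?_, ?_⟩, ?_, ?_⟩ <;> intro h <;>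
      first
        | exact h.elim
        | exact n12 h | exact n13 h | exact n14 h | exact n15 h | exact n16 h | exact n17 h
        | exact n23 h | exact n24 h | exact n25 h | exact n26 h | exact n27 h
        | exact n34 h | exact n35 h | exact n36 h | exact n37 h
        | exact n45 h | exact n46 h | exact n47 h | exact n56 h | exact n57 h | exact n67 h
        | exact n12 h.symm | exact n13 h.symm | exact n14 h.symm | exact n15 h.symm
        | exact n16 h.symm | exact n17 h.symm | exact n23 h.symm | exact n24 h.symm
        | exact n25 h.symm | exact n26 h.symm | exact n27 h.symm | exact n34 h.symm
        | exact n35 h.symm | exact n36 h.symm | exact n37 h.symm | exact n45 h.symm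
        | exact n46 h.symm | exact n47 h.symm | exact n56 h.symm | exact n57 h.symm
        | exact n67 h.symm
  have chainC : List.Chain P.G.Adj w4 [w3, t, u3, v2, v1, u4] :=
    List.Chain.cons aw34.symm (List.Chain.cons atw3.symm (List.Chain.cons au3t.symm (List.Chain.cons a2u3.symm (List.Chain.cons a12.symm (List.Chain.cons au41.symm List.Chain.nil)))))
  have covC : ∀ v ∈ S, v ∈ w4 :: [w3, t, u3, v2, v1, u4] := by
    intro v hv
    rw [hSmem] at hv
    rcases hv with rfl | rfl | rfl | rfl | rfl | rfl | rfl <;> simp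
  have subC : ∀ v ∈ (w4 :: [w3, t, u3, v2, v1, u4] : List V), v ∈ S := by
    intro v hv
    rw [hSmem]
    simp only [List.mem_cons, List.not_mem_nil, or_false] at hv
    rcases hv with rfl | rfl | rfl | rfl | rfl | rfl | rfl <;> simp
  have ndC : (w4 :: [w3, t, u3, v2, v1, u4] : List V).Nodup := by
    simp only [List.nodup_cons, List.mem_cons, List.not_mem_nil, or_false, not_or,
      List.mem_singleton, List.nodup_nil, and_true]
    refine ⟨⟨?_, ?_, ?_, ?_, ?_, ?_⟩, ⟨?_, ?_, ?_, ?_, ?_⟩, ⟨?_, ?_, ?_, ?_⟩,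
      ⟨?_, ?_, ?_⟩, ⟨?_, ?_⟩, ?_, ?_⟩ <;> intro h <;>
      first
        | exact h.elim
        | exact n12 h | exact n13 h | exact n14 h | exact n15 h | exact n16 h | exact n17 h
        | exact n23 h | exact n24 h | exact n25 h | exact n26 h | exact n27 h
        | exact n34 h | exact n35 h | exact n36 h | exact n37 h
        | exact n45 h | exact n46 h | exact n47 h | exact n56 h | exact n57 h | exact n67 h
        | exact n12 h.symm | exact n13 h.symm | exact n14 h.symm | exact n15 h.symm
        | exact n16 h.symm | exact n17 h.symm | exact n23 h.symm | exact n24 h.symm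
        | exact n25 h.symm | exact n26 h.symm | exact n27 h.symm | exact n34 h.symm
        | exact n35 h.symm | exact n36 h.symm | exact n37 h.symm | exact n45 h.symm
        | exact n46 h.symm | exact n47 h.symm | exact n56 h.symm | exact n57 h.symm
        | exact n67 h.symm
  have chainD : List.Chain P.G.Adj w4 [v1, u4, u3, v2, w3, t] :=
    List.Chain.cons aw41 (List.Chain.cons au41.symm (List.Chain.cons au34.symm (List.Chain.cons a2u3.symm (List.Chain.cons a2w3 (List.Chain.cons atw3.symm List.Chain.nil)))))
  have covD : ∀ v ∈ S, v ∈ w4 :: [v1, u4, u3, v2, w3, t] := by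
    intro v hv
    rw [hSmem] at hv
    rcases hv with rfl | rfl | rfl | rfl | rfl | rfl | rfl <;> simp
  have subD : ∀ v ∈ (w4 :: [v1, u4, u3, v2, w3, t] : List V), v ∈ S := by
    intro v hv
    rw [hSmem]
    simp only [List.mem_cons, List.not_mem_nil, or_false] at hv
    rcases hv with rfl | rfl | rfl | rfl | rfl | rfl | rfl <;> simp
  have ndD : (w4 :: [v1, u4, u3, v2, w3, t] : List V).Nodup := by
    simp only [List.nodup_cons, List.mem_cons, List.not_mem_nil, or_false, not_or,
      List.mem_singleton, List.nodup_nil, and_true]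
    refine ⟨⟨?_, ?_, ?_, ?_, ?_, ?_⟩, ⟨?_, ?_, ?_, ?_, ?_⟩, ⟨?_, ?_, ?_, ?_⟩,
      ⟨?_, ?_, ?_⟩, ⟨?_, ?_⟩, ?_, ?_⟩ <;> intro h <;>
      first
        | exact h.elim
        | exact n12 h | exact n13 h | exact n14 h | exact n15 h | exact n16 h | exact n17 h
        | exact n23 h | exact n24 h | exact n25 h | exact n26 h | exact n27 h
        | exact n34 h | exact n35 h | exact n36 h | exact n37 h
        | exact n45 h | exact n46 h | exact n47 h | exact n56 h | exact n57 h | exact n67 h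
        | exact n12 h.symm | exact n13 h.symm | exact n14 h.symm | exact n15 h.symm
        | exact n16 h.symm | exact n17 h.symm | exact n23 h.symm | exact n24 h.symm
        | exact n25 h.symm | exact n26 h.symm | exact n27 h.symm | exact n34 h.symm
        | exact n35 h.symm | exact n36 h.symm | exact n37 h.symm | exact n45 h.symm
        | exact n46 h.symm | exact n47 h.symm | exact n56 h.symm | exact n57 h.symm
        | exact n67 h.symm
  have chainE : List.Chain P.G.Adj t [u3, v2, w3, w4, v1, u4] :=
    List.Chain.cons au3t.symm (List.Chain.cons a2u3.symm (List.Chain.cons a2w3 (List.Chain.cons aw34 (List.Chain.cons aw41 (List.Chain.cons au41.symm List.Chain.nil)))))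
  have covE : ∀ v ∈ S, v ∈ t :: [u3, v2, w3, w4, v1, u4] := by
    intro v hv
    rw [hSmem] at hv
    rcases hv with rfl | rfl | rfl | rfl | rfl | rfl | rfl <;> simp
  have subE : ∀ v ∈ (t :: [u3, v2, w3, w4, v1, u4] : List V), v ∈ S := by
    intro v hv
    rw [hSmem]
    simp only [List.mem_cons, List.not_mem_nil, or_false] at hv
    rcases hv with rfl | rfl | rfl | rfl | rfl | rfl | rfl <;> simp
  have ndE : (t :: [u3, v2, w3, w4, v1, u4] : List V).Nodup := by
    simp only [List.nodup_cons, List.mem_cons, List.not_mem_nil, or_false, not_or,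
      List.mem_singleton, List.nodup_nil, and_true]
    refine ⟨⟨?_, ?_, ?_, ?_, ?_, ?_⟩, ⟨?_, ?_, ?_, ?_, ?_⟩, ⟨?_, ?_, ?_, ?_⟩,
      ⟨?_, ?_, ?_⟩, ⟨?_, ?_⟩, ?_, ?_⟩ <;> intro h <;>
      first
        | exact h.elim
        | exact n12 h | exact n13 h | exact n14 h | exact n15 h | exact n16 h | exact n17 h
        | exact n23 h | exact n24 h | exact n25 h | exact n26 h | exact n27 h
        | exact n34 h | exact n35 h | exact n36 h | exact n37 h
        | exact n45 h | exact n46 h | exact n47 h | exact n56 h | exact n57 h | exact n67 h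
        | exact n12 h.symm | exact n13 h.symm | exact n14 h.symm | exact n15 h.symm
        | exact n16 h.symm | exact n17 h.symm | exact n23 h.symm | exact n24 h.symm
        | exact n25 h.symm | exact n26 h.symm | exact n27 h.symm | exact n34 h.symm
        | exact n35 h.symm | exact n36 h.symm | exact n37 h.symm | exact n45 h.symm
        | exact n46 h.symm | exact n47 h.symm | exact n56 h.symm | exact n57 h.symm
        | exact n67 h.symm
  have chainF : List.Chain P.G.Adj t [w3, v2, u3, u4, v1, w4] :=
    List.Chain.cons atw3 (List.Chain.cons a2w3.symm (List.Chain.cons a2u3 (List.Chain.cons au34 (List.Chain.cons au41 (List.Chain.cons aw41.symm List.Chain.nil)))))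
  have covF : ∀ v ∈ S, v ∈ t :: [w3, v2, u3, u4, v1, w4] := by
    intro v hv
    rw [hSmem] at hv
    rcases hv with rfl | rfl | rfl | rfl | rfl | rfl | rfl <;> simp
  have subF : ∀ v ∈ (t :: [w3, v2, u3, u4, v1, w4] : List V), v ∈ S := by
    intro v hv
    rw [hSmem]
    simp only [List.mem_cons, List.not_mem_nil, or_false] at hv
    rcases hv with rfl | rfl | rfl | rfl | rfl | rfl | rfl <;> simp
  have ndF : (t :: [w3, v2, u3, u4, v1, w4] : List V).Nodup := by
    simp only [List.nodup_cons, List.mem_cons, List.not_mem_nil, or_false, not_or,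
      List.mem_singleton, List.nodup_nil, and_true]
    refine ⟨⟨?_, ?_, ?_, ?_, ?_, ?_⟩, ⟨?_, ?_, ?_, ?_, ?_⟩, ⟨?_, ?_, ?_, ?_⟩,
      ⟨?_, ?_, ?_⟩, ⟨?_, ?_⟩, ?_, ?_⟩ <;> intro h <;>
      first
        | exact h.elim
        | exact n12 h | exact n13 h | exact n14 h | exact n15 h | exact n16 h | exact n17 h
        | exact n23 h | exact n24 h | exact n25 h | exact n26 h | exact n27 h
        | exact n34 h | exact n35 h | exact n36 h | exact n37 h
        | exact n45 h | exact n46 h | exact n47 h | exact n56 h | exact n57 h | exact n67 h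
        | exact n12 h.symm | exact n13 h.symm | exact n14 h.symm | exact n15 h.symm
        | exact n16 h.symm | exact n17 h.symm | exact n23 h.symm | exact n24 h.symm
        | exact n25 h.symm | exact n26 h.symm | exact n27 h.symm | exact n34 h.symm
        | exact n35 h.symm | exact n36 h.symm | exact n37 h.symm | exact n45 h.symm
        | exact n46 h.symm | exact n47 h.symm | exact n56 h.symm | exact n57 h.symm
        | exact n67 h.symm
  -- the collapsed vertex and the section ψ
  set z := φ v1 with hz
  have hv1S : v1 ∈ S := by rw [hSmem]; tauto
  have hSz : ∀ a ∈ S, φ a = z := fun a ha => hcollapse a ha v1 hv1S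
  have hpre : ∀ a, φ a = z → a ∈ S := by
    intro a ha
    rcases hinj a v1 ha with rfl | ⟨h, _⟩
    · exact hv1S
    · exact h
  set ψ := Function.surjInv hφsurj with hψ
  have hψφ : ∀ w, φ (ψ w) = w := fun w => Function.surjInv_eq hφsurj w
  have hψinj : Function.Injective ψ := Function.injective_surjInv hφsurj
  have hψu : ∀ w, w ≠ z → ∀ a, φ a = w → a = ψ w := by
    intro w hw a ha
    rcases hinj a (ψ w) (by rw [ha, hψφ]) with h | ⟨h1, _⟩
    · exact h
    · exact absurd (ha ▸ hSz a h1 : w = z) hw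
  have hψS : ∀ w, w ≠ z → ψ w ∉ S := fun w hw hmem => hw (by rw [← hψφ w]; exact hSz _ hmem)
  have hψv : ∀ v, v ∉ S → ψ (φ v) = v ∧ φ v ≠ z := by
    intro v hv
    have hvz : φ v ≠ z := fun h => hv (hpre v h)
    exact ⟨(hψu (φ v) hvz v rfl).symm, hvz⟩
  have hlift : ∀ x y, x ≠ z → y ≠ z → G2.Adj x y → P.G.Adj (ψ x) (ψ y) := by
    intro x y hx hy h
    obtain ⟨a, b, ha, hb, hab, -⟩ := (hG2 x y).mp h
    have e1 := hψu x hx a ha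
    have e2 := hψu y hy b hb
    rw [← e1, ← e2]
    exact hab
  have hzedge : ∀ y, y ≠ z → G2.Adj z y →
      ψ y ∉ S ∧ (ψ y = x4 ∨ ψ y = y4 ∨ ψ y = t4) := by
    intro y hy h
    obtain ⟨a, b, ha, hb, hab, hnab⟩ := (hG2 z y).mp h
    have haS : a ∈ S := hpre a ha
    have hbS : b ∉ S := fun hb' => hnab ⟨haS, hb'⟩
    have hbψ : b = ψ y := hψu y hy b hb
    subst hbψ
    refine ⟨hbS, ?_⟩
    rw [hSmem] at haS
    have hmemS : ∀ c, (c = v1 ∨ c = v2 ∨ c = u3 ∨ c = u4 ∨ c = w3 ∨ c = w4 ∨ c = t) → c ∈ S := by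
      intro c hc; rw [hSmem]; exact hc
    rcases haS with rfl | rfl | rfl | rfl | rfl | rfl | rfl
    · rcases hv1n _ hab with h' | h' | h' <;> exact absurd (hmemS _ (by simp)) (h' ▸ hbS)
    · rcases hv2n _ hab with h' | h' | h' <;> exact absurd (hmemS _ (by simp)) (h' ▸ hbS)
    · rcases hu3n _ hab with h' | h' | h'
      · exact absurd (hmemS _ (by simp)) (h' ▸ hbS)
      · exact absurd (hmemS _ (by simp)) (h' ▸ hbS)
      · exact absurd (hmemS _ (by simp)) (h' ▸ hbS)
    · rcases hu4n _ hab with h' | h' | h'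
      · exact absurd (hmemS _ (by simp)) (h' ▸ hbS)
      · exact absurd (hmemS _ (by simp)) (h' ▸ hbS)
      · exact Or.inl h'
    · rcases hw3n _ hab with h' | h' | h' <;> exact absurd (hmemS _ (by simp)) (h' ▸ hbS)
    · rcases hw4n _ hab with h' | h' | h'
      · exact absurd (hmemS _ (by simp)) (h' ▸ hbS)
      · exact absurd (hmemS _ (by simp)) (h' ▸ hbS)
      · exact Or.inr (Or.inl h')
    · rcases htn _ hab with h' | h' | h'
      · exact absurd (hmemS _ (by simp)) (h' ▸ hbS)
      · exact absurd (hmemS _ (by simp)) (h' ▸ hbS)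
      · exact Or.inr (Or.inr h')
  -- |W| ≠ 1
  have hWcard : Fintype.card W ≠ 1 := by
    intro h1
    have hone : ∀ x y : W, x = y := fun x y => Fintype.card_le_one_iff.mp h1.le x y
    have hall : ∀ v : V, v ∈ S := fun v => hpre v (hone (φ v) z)
    have h7 : Fintype.card V ≤ 7 := by
      have hsub : (Finset.univ : Finset V) ⊆ [v1, v2, u3, u4, w3, w4, t].toFinset := by
        intro v _
        have hv := hall v
        rw [hSmem] at hv
        simp only [List.toFinset_cons, List.toFinset_nil, Finset.mem_insert,
          Finset.mem_singleton, insert_empty_eq]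
        simpa using hv
      calc Fintype.card V = (Finset.univ : Finset V).card := rfl
        _ ≤ _ := Finset.card_le_card hsub
        _ ≤ 7 := List.toFinset_card_le _
    have h7' : 7 ≤ Fintype.card V := by simpa using hnodup.length_le_card
    have hVc : Fintype.card V = 7 := le_antisymm h7 h7'
    have hhs := P.G.sum_degrees_eq_twice_card_edges
    have hdeg : ∀ v : V, P.G.degree v = 3 := by
      intro v
      have hc := hcubic v
      rwa [Set.ncard_eq_toFinset_card', ← SimpleGraph.neighborFinset_def] at hc
    rw [Finset.sum_congr rfl (fun v _ => hdeg v), Finset.sum_const, smul_eq_mul,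
      Finset.card_univ, hVc] at hhs
    omega
  -- extract and rotate the hamiltonian cycle of G2
  obtain ⟨r, c, hc⟩ := hham hWcard
  have hzc : z ∈ c.support := hc.mem_support z
  have hdc : (c.rotate z hzc).IsCycle := hc.isCycle.rotate hzc
  have hdcount : ∀ w, (c.rotate z hzc).support.tail.count w = 1 := by
    intro w
    have hperm := (SimpleGraph.Walk.support_rotate c z hzc).perm
    rw [hperm.count_eq]
    exact ((Walk.isHamiltonianCycle_iff_isCycle_and_support_count_tail_eq_one).mp hc).2 w
  set d := c.rotate z hzc with hd
  set m := d.support.tail with hm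
  have hms : d.support = z :: m := d.support_eq_cons
  have hchainzm : List.Chain G2.Adj z m := by
    have h' := d.isChain_adj_support
    rw [hms] at h'
    exact h'
  have hmlen : 3 ≤ m.length := by
    have h1 := hdc.three_le_length
    have h2 := d.length_support
    rw [hms] at h2
    simp only [List.length_cons] at h2
    omega
  have hmne : m ≠ [] := by intro h; rw [h] at hmlen; simp at hmlen
  have hmlast : m.getLast hmne = z := by
    have h1 : (z :: m).getLast? = some z := by
      rw [← hms, List.getLast?_eq_getLast d.support_ne_nil]
      exact congrArg _ d.getLast_support
    rwa [List.getLast?_eq_getLast (List.cons_ne_nil _ _), Option.some_inj,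
      List.getLast_cons hmne] at h1
  have hmnd : m.Nodup := List.nodup_iff_count_le_one.mpr fun w => (hdcount w).le
  have hmmem : ∀ w, w ∈ m := fun w => List.count_pos_iff.mp (by rw [hdcount w]; norm_num)
  have hml' : m.dropLast ++ [z] = m := by
    conv_rhs => rw [← List.dropLast_append_getLast hmne]
    rw [hmlast]
  have hznl' : z ∉ m.dropLast := by
    intro hzl
    have hcz := hdcount z
    rw [← hml', List.count_append] at hcz
    have h1 : 0 < m.dropLast.count z := List.count_pos_iff.mpr hzl
    simp at hcz
    omega
  have hl'len : 2 ≤ m.dropLast.length := by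
    have : m.length = m.dropLast.length + 1 := by
      conv_lhs => rw [← hml']
      simp
    omega
  have hl'ne : m.dropLast ≠ [] := by
    intro h; rw [h] at hl'len; simp at hl'len
  have hchainm' : List.Chain G2.Adj z (m.dropLast ++ [z]) := by rw [hml']; exact hchainzm
  have hlastadj : G2.Adj ((z :: m.dropLast).getLast (List.cons_ne_nil _ _)) z :=
    chain_concat_getLast _ z z hchainm'
  have hchainl' : List.Chain G2.Adj z m.dropLast := chain_prefix _ hchainm'
  obtain ⟨p₁, l'', hpl⟩ := List.exists_cons_of_ne_nil hl'ne
  rw [hpl] at hlastadj hchainl' hznl' hl'len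
  rw [List.getLast_cons (List.cons_ne_nil _ _)] at hlastadj
  simp only [List.Chain, List.chain_cons] at hchainl'
  obtain ⟨hadj_zp1, hchainl''⟩ := hchainl'
  have hl'nd : (p₁ :: l'').Nodup := by
    rw [← hpl]
    exact hmnd.sublist (List.dropLast_sublist m)
  have hne_z : ∀ x ∈ p₁ :: l'', x ≠ z := by
    intro x hx h
    rw [h] at hx
    exact hznl' hx
  have hpn_mem : (p₁ :: l'').getLast (List.cons_ne_nil _ _) ∈ p₁ :: l'' := List.getLast_mem _
  have hadj_pn_z : G2.Adj z ((p₁ :: l'').getLast (List.cons_ne_nil _ _)) := hlastadj.symm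
  obtain ⟨hp1S, hp1cases⟩ := hzedge p₁ (hne_z p₁ (by simp)) hadj_zp1
  obtain ⟨hpnS, hpncases⟩ :=
    hzedge _ (hne_z _ hpn_mem) hadj_pn_z
  -- p₁ ≠ pn
  have hl''ne : l'' ≠ [] := by
    intro h
    rw [h] at hl'len
    simp at hl'len
  have hp1pn : p₁ ≠ (p₁ :: l'').getLast (List.cons_ne_nil _ _) := by
    rw [List.getLast_cons hl''ne]
    intro h
    have : p₁ ∈ l'' := h ▸ List.getLast_mem hl''ne
    exact (List.nodup_cons.mp hl'nd).1 this
  have hψp1pn : ψ p₁ ≠ ψ ((p₁ :: l'').getLast (List.cons_ne_nil _ _)) :=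
    fun h => hp1pn (hψinj h)
  -- lifted chain on the outside part
  have hchmap : List.Chain P.G.Adj (ψ p₁) (l''.map ψ) :=
    chain_lift (P := fun x => x ≠ z) (fun x y hx hy h => hlift x y hx hy h) l'' p₁
      (hne_z p₁ (by simp)) (fun x hx => hne_z x (by simp [hx])) hchainl''
  have hmapS : ∀ v ∈ (p₁ :: l'').map ψ, v ∉ S := by
    intro v hv
    obtain ⟨x, hx, rfl⟩ := List.mem_map.mp hv
    exact hψS x (hne_z x hx)
  have hmapnd : ((p₁ :: l'').map ψ).Nodup := hl'nd.map hψinj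
  have hcovmap : ∀ v, v ∉ S → v ∈ (p₁ :: l'').map ψ := by
    intro v hv
    obtain ⟨heq, hz'⟩ := hψv v hv
    have hvm : φ v ∈ m := hmmem (φ v)
    rw [← hml', List.mem_append] at hvm
    rcases hvm with h' | h'
    · rw [hpl] at h'
      rw [← heq]
      exact List.mem_map_of_mem (f := ψ) h'
    · simp only [List.mem_singleton] at h'
      exact absurd h' hz'
  -- the finisher
  have hfinish : ∀ (e7 : V) (rest : List V),
      List.Chain P.G.Adj e7 rest →
      P.G.Adj (ψ ((p₁ :: l'').getLast (List.cons_ne_nil _ _))) e7 →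
      P.G.Adj ((e7 :: rest).getLast (List.cons_ne_nil _ _)) (ψ p₁) →
      1 ≤ rest.length →
      (∀ v ∈ S, v ∈ e7 :: rest) →
      (∀ v ∈ e7 :: rest, v ∈ S) →
      (e7 :: rest).Nodup →
      P.G.IsHamiltonian := by
    intro e7 rest hchain7 hentry hexit hrlen hS7 h7S h7nd
    apply hamiltonian_of_cycle_list (ψ p₁) (l''.map ψ ++ e7 :: rest)
      (chain_append_of _ _ _ _ hchmap (by rw [getLast_map_cons]; exact hentry) hchain7)
      (by simp)
    · have heq : (l''.map ψ ++ e7 :: rest).getLast (by simp) =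
          (e7 :: rest).getLast (List.cons_ne_nil _ _) :=
        List.getLast_append_of_ne_nil _ (List.cons_ne_nil _ _)
      rw [heq]
      exact hexit
    · show (((p₁ :: l'').map ψ) ++ e7 :: rest).Nodup
      exact List.Nodup.append hmapnd h7nd (fun x hx hx2 => hmapS x hx (h7S _ hx2))
    · intro v
      show v ∈ ((p₁ :: l'').map ψ) ++ e7 :: rest
      rw [List.mem_append]
      by_cases hv : v ∈ S
      · exact Or.inr (hS7 v hv)
      · exact Or.inl (hcovmap v hv)
    · simp only [List.length_append, List.length_cons]
      omega
  -- case analysis on the two attachment vertices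
  have hSlist : ∀ (l : List V), (∀ x, x ∈ S → x ∈ l) → ∀ v ∈ S, v ∈ l := fun l h => h
  rcases hpncases with hpn | hpn | hpn <;> rcases hp1cases with hp1 | hp1 | hp1
  · exact absurd (hp1.trans hpn.symm) hψp1pn
  · refine hfinish u4 [u3, t, w3, v2, v1, w4] chainA (by rw [hpn]; exact hax4.symm) ?_ (by norm_num) covA subA ndA
    show P.G.Adj w4 (ψ p₁)
    rw [hp1]; exact hay4
  · refine hfinish u4 [v1, w4, w3, v2, u3, t] chainB (by rw [hpn]; exact hax4.symm) ?_ (by norm_num) covB subB ndB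
    show P.G.Adj t (ψ p₁)
    rw [hp1]; exact hat4
  · refine hfinish w4 [w3, t, u3, v2, v1, u4] chainC (by rw [hpn]; exact hay4.symm) ?_ (by norm_num) covC subC ndC
    show P.G.Adj u4 (ψ p₁)
    rw [hp1]; exact hax4
  · exact absurd (hp1.trans hpn.symm) hψp1pn
  · refine hfinish w4 [v1, u4, u3, v2, w3, t] chainD (by rw [hpn]; exact hay4.symm) ?_ (by norm_num) covD subD ndD
    show P.G.Adj t (ψ p₁)
    rw [hp1]; exact hat4
  · refine hfinish t [u3, v2, w3, w4, v1, u4] chainE (by rw [hpn]; exact hat4.symm) ?_ (by norm_num) covE subE ndE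
    show P.G.Adj u4 (ψ p₁)
    rw [hp1]; exact hax4
  · refine hfinish t [w3, v2, u3, u4, v1, w4] chainF (by rw [hpn]; exact hat4.symm) ?_ (by norm_num) covF subF ndF
    show P.G.Adj w4 (ψ p₁)
    rw [hp1]; exact hay4
  · exact absurd (hp1.trans hpn.symm) hψp1pn
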